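/- Let U be a nonempty open subset of ℂ, N ≥ 1 an integer, and suppose F : U → ℂ is given by F(z) = Σ_{p=0}^{N-1} F_p(z) · (conj z)^p where each F_p : U → ℂ is holomorphic on U. If F is identically zero on U and U is connected, then each F_p is identically zero on U. -/

import Mathlib

open Complex Metric
lemma polyCoeffZero {N : ℕ} (a : ℕ → ℂ) (z₀ : ℂ)
    (h : ∀ u : ℂ, u ≠ z₀ → ∑ p ∈ Finset.range N, a p * u ^ p = 0) :
    ∀ p < N, a p = 0 := by
  have hP : (∑ p ∈ Finset.range N, Polynomial.C (a p) * Polynomial.X ^ p) = 0 := by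
    apply Polynomial.eq_zero_of_infinite_isRoot
    apply Set.Infinite.mono (s := ({z₀}ᶜ : Set ℂ))
    · intro u hu
      have := h u (by simpa using hu)
      simpa [Polynomial.IsRoot, Polynomial.eval_finset_sum] using this
    · exact (Set.finite_singleton z₀).infinite_compl
  intro p hp
  have := congrArg (fun q => Polynomial.coeff q p) hP
  simpa [Polynomial.finset_sum_coeff, Polynomial.coeff_C_mul, Polynomial.coeff_X_pow, hp] using this

lemma keyStep1 (U : Set ℂ) (hU : IsOpen U) (N : ℕ) (F : ℕ → ℂ → ℂ)
    (hF : ∀ p < N, DifferentiableOn ℂ (F p) U)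
    (hzero : ∀ z ∈ U, ∑ p ∈ Finset.range N, F p z * (starRingEnd ℂ z) ^ p = 0)
    (z₀ : ℂ) (r : ℝ) (hr : 0 < r) (hball : ball z₀ r ⊆ U)
    (c : ℂ) (hc : ‖c‖ = 1) :
    ∀ w ∈ ball (0:ℂ) r,
      ∑ p ∈ Finset.range N, F p (z₀ + c * w) * ((starRingEnd ℂ) z₀ + (starRingEnd ℂ) c * w) ^ p = 0 := by
  set g : ℂ → ℂ := fun w => ∑ p ∈ Finset.range N,
    F p (z₀ + c * w) * ((starRingEnd ℂ) z₀ + (starRingEnd ℂ) c * w) ^ p with hg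
  have hmaps : ∀ w ∈ ball (0:ℂ) r, z₀ + c * w ∈ U := by
    intro w hw
    apply hball
    simp only [mem_ball, dist_eq] at hw ⊢
    simpa [map_mul, hc] using hw
  have hdiff : DifferentiableOn ℂ g (ball (0:ℂ) r) := by
    apply DifferentiableOn.fun_sum
    intro p hp
    apply DifferentiableOn.mul
    · exact (hF p (Finset.mem_range.mp hp)).comp
        (differentiable_const _ |>.add ((differentiable_const _).mul differentiable_id)).differentiableOn
        hmaps
    · exact ((differentiable_const _ |>.add ((differentiable_const _).mul differentiable_id)).pow p).differentiableOn
  have hanal : AnalyticOnNhd ℂ g (ball (0:ℂ) r) := hdiff.analyticOnNhd isOpen_ball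
  have hfreq : ∃ᶠ w in nhdsWithin (0:ℂ) {(0:ℂ)}ᶜ, g w = 0 := by
    have htend : Filter.Tendsto (fun n : ℕ => ((r / 2 / (n + 1) : ℝ) : ℂ))
        Filter.atTop (nhdsWithin (0:ℂ) {(0:ℂ)}ᶜ) := by
      apply tendsto_nhdsWithin_of_tendsto_nhds_of_eventually_within
      · rw [show (0:ℂ) = ((0:ℝ):ℂ) by norm_num]
        apply Filter.Tendsto.comp (Complex.continuous_ofReal.tendsto 0)
        have : Filter.Tendsto (fun n : ℕ => (r / 2 / (n + 1) : ℝ)) Filter.atTop (nhds 0) :=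
          Filter.Tendsto.div_atTop tendsto_const_nhds (tendsto_natCast_atTop_atTop.atTop_add tendsto_const_nhds)
        exact this
      · apply Filter.Eventually.of_forall
        intro n
        simp only [Set.mem_compl_iff, Set.mem_singleton_iff]
        intro h
        have : (r / 2 / (n + 1) : ℝ) = 0 := by exact_mod_cast h
        have hpos : (0:ℝ) < r / 2 / (n + 1) := by positivity
        linarith
    apply htend.frequently
    apply Filter.Frequently.of_forall
    intro n
    have hlt : |(r / 2 / (n + 1) : ℝ)| < r := by
      rw [abs_of_pos (by positivity)]
      have h1 : (1:ℝ) ≤ n + 1 := by exact_mod_cast Nat.one_le_iff_ne_zero.mpr (Nat.succ_ne_zero n)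
      calc r / 2 / (n + 1) ≤ r / 2 / 1 := by
            apply div_le_div_of_nonneg_left (by linarith) one_pos h1
        _ = r / 2 := by ring
        _ < r := by linarith
    set t : ℝ := r / 2 / (n + 1)
    have hmem : ((t:ℂ)) ∈ ball (0:ℂ) r := by
      simp only [mem_ball, dist_eq, sub_zero]
      simpa using hlt
    have hz : z₀ + c * (t:ℂ) ∈ U := hmaps _ hmem
    have := hzero _ hz
    have hconj : (starRingEnd ℂ) (z₀ + c * (t:ℂ)) = (starRingEnd ℂ) z₀ + (starRingEnd ℂ) c * (t:ℂ) := by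
      simp [map_add, map_mul, Complex.conj_ofReal]
    rw [hconj] at this
    exact this
  have := hanal.eqOn_zero_of_preconnected_of_frequently_eq_zero
    ((convex_ball (0:ℂ) r).isPreconnected) (mem_ball_self hr) hfreq
  intro w hw
  exact this hw

lemma keyStep2 (U : Set ℂ) (hU : IsOpen U) (N : ℕ) (F : ℕ → ℂ → ℂ)
    (hF : ∀ p < N, DifferentiableOn ℂ (F p) U)
    (hzero : ∀ z ∈ U, ∑ p ∈ Finset.range N, F p z * (starRingEnd ℂ z) ^ p = 0)
    (z₀ : ℂ) (r : ℝ) (hr : 0 < r) (hball : ball z₀ r ⊆ U)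
    (s : ℂ) (hs : s ≠ 0) (hsr : ‖s‖ < r) :
    ∀ p < N, F p (z₀ + s) = 0 := by
  have step2 : ∀ θ : ℝ, ∑ p ∈ Finset.range N,
      F p (z₀ + s) * ((starRingEnd ℂ) z₀ + Complex.exp (θ * I) * s) ^ p = 0 := by
    intro θ
    set c : ℂ := Complex.exp ((-(θ/2) : ℝ) * I) with hcdef
    have hc : ‖c‖ = 1 := Complex.norm_exp_ofReal_mul_I _
    have hconjc : (starRingEnd ℂ) c = Complex.exp (((θ/2) : ℝ) * I) := by
      rw [hcdef, ← Complex.exp_conj]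
      rw [map_mul, Complex.conj_ofReal, Complex.conj_I]
      push_cast
      ring_nf
    set w : ℂ := (starRingEnd ℂ) c * s with hwdef
    have hw : w ∈ ball (0:ℂ) r := by
      simp only [mem_ball, dist_eq, sub_zero, hwdef, map_mul]
      simp only [norm_mul, Complex.norm_conj, hc, one_mul]
      exact hsr
    have h1 := keyStep1 U hU N F hF hzero z₀ r hr hball c hc w hw
    have hcw : c * w = s := by
      rw [hwdef, ← mul_assoc, Complex.mul_conj]
      rw [← Complex.sq_norm, hc]
      norm_num
    have hcw2 : (starRingEnd ℂ) c * w = Complex.exp (θ * I) * s := by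
      rw [hwdef, ← mul_assoc, hconjc, ← Complex.exp_add]
      congr 2
      push_cast
      ring
    rw [hcw, hcw2] at h1
    exact h1
  set H : ℂ → ℂ := fun θ => ∑ p ∈ Finset.range N,
    F p (z₀ + s) * ((starRingEnd ℂ) z₀ + Complex.exp θ * s) ^ p with hHdef
  have hHanal : AnalyticOnNhd ℂ H Set.univ := by
    apply DifferentiableOn.analyticOnNhd _ isOpen_univ
    apply Differentiable.differentiableOn
    apply Differentiable.fun_sum
    intro p hp
    exact (differentiable_const _).mul
      (((differentiable_const _).add (Complex.differentiable_exp.mul (differentiable_const _))).pow p)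
  have hfreq : ∃ᶠ θ in nhdsWithin (0:ℂ) {(0:ℂ)}ᶜ, H θ = 0 := by
    have htend : Filter.Tendsto (fun n : ℕ => ((1 / (n + 1) : ℝ) : ℂ) * I)
        Filter.atTop (nhdsWithin (0:ℂ) {(0:ℂ)}ᶜ) := by
      apply tendsto_nhdsWithin_of_tendsto_nhds_of_eventually_within
      · have h0 : Filter.Tendsto (fun n : ℕ => (1 / (n + 1) : ℝ)) Filter.atTop (nhds 0) :=
          tendsto_one_div_add_atTop_nhds_zero_nat
        have := ((Complex.continuous_ofReal.tendsto 0).comp h0).mul_const I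
        simpa using this
      · apply Filter.Eventually.of_forall
        intro n
        simp only [Set.mem_compl_iff, Set.mem_singleton_iff]
        intro h
        rcases mul_eq_zero.mp h with h' | h'
        · have : (1 / (n + 1) : ℝ) = 0 := by exact_mod_cast h'
          have : (0:ℝ) < 1 / (n + 1) := by positivity
          linarith
        · exact Complex.I_ne_zero h'
    apply htend.frequently
    apply Filter.Frequently.of_forall
    intro n
    exact step2 (1 / (n + 1))
  have hHzero := hHanal.eqOn_zero_of_preconnected_of_frequently_eq_zero
    isPreconnected_univ (Set.mem_univ (0:ℂ)) hfreq
  have step4 : ∀ u : ℂ, u ≠ (starRingEnd ℂ) z₀ →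
      ∑ p ∈ Finset.range N, F p (z₀ + s) * u ^ p = 0 := by
    intro u hu
    have hv : (u - (starRingEnd ℂ) z₀) / s ≠ 0 :=
      div_ne_zero (sub_ne_zero.mpr hu) hs
    have : (u - (starRingEnd ℂ) z₀) / s ∈ Set.range Complex.exp := by
      rw [Complex.range_exp]
      simpa using hv
    obtain ⟨θ, hθ⟩ := this
    have := hHzero (Set.mem_univ θ)
    simp only [hHdef, Pi.zero_apply] at this
    rw [hθ] at this
    have heq : (starRingEnd ℂ) z₀ + (u - (starRingEnd ℂ) z₀) / s * s = u := by
      field_simp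
      ring
    rw [heq] at this
    exact this
  exact polyCoeffZero (fun p => F p (z₀ + s)) ((starRingEnd ℂ) z₀) step4

theorem stmt7 (U : Set ℂ) (hU : IsOpen U) (hUne : U.Nonempty) (hUc : IsConnected U)
    (N : ℕ) (hN : 1 ≤ N) (F : ℕ → ℂ → ℂ)
    (hF : ∀ p < N, DifferentiableOn ℂ (F p) U)
    (hzero : ∀ z ∈ U, ∑ p ∈ Finset.range N, F p z * (starRingEnd ℂ z) ^ p = 0) :
    ∀ p < N, ∀ z ∈ U, F p z = 0 := by
  intro p hp z hz
  obtain ⟨ε, hε, hball⟩ := Metric.isOpen_iff.mp hU z hz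
  set z₀ : ℂ := z + ((ε/4 : ℝ) : ℂ) with hz₀
  have hball2 : ball z₀ (ε/2) ⊆ U := by
    apply Set.Subset.trans _ hball
    apply ball_subset_ball'
    have : dist z₀ z = ε/4 := by
      simp only [hz₀, dist_eq]
      rw [add_sub_cancel_left]
      rw [Complex.norm_real, Real.norm_eq_abs]
      rw [abs_of_pos (by linarith)]
    rw [this]; linarith
  have hs : (-(ε/4 : ℝ) : ℂ) ≠ 0 := by
    simp only [ne_eq, neg_eq_zero]
    exact_mod_cast (by positivity : (0:ℝ) < ε/4).ne'
  have hsr : ‖(-(ε/4 : ℝ) : ℂ)‖ < ε/2 := by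
    rw [norm_neg, Complex.norm_real, Real.norm_eq_abs, abs_of_pos (by linarith)]
    linarith
  have := keyStep2 U hU N F hF hzero z₀ (ε/2) (by linarith) hball2
    (-(ε/4 : ℝ) : ℂ) hs hsr p hp
  have hzz : z₀ + (-(ε/4 : ℝ) : ℂ) = z := by
    simp [hz₀]
  rwa [hzz] at this
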